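/- The number of distinct squares occurring in a circular word of length n is at most 3.75·n. -/

import Mathlib

/-- `p` is a period of `w`: `p ≥ 1` and `w[i] = w[i+p]` for all valid indices. -/
def IsPeriod {α : Type*} (w : List α) (p : ℕ) : Prop :=
  1 ≤ p ∧ ∀ i, i + p < w.length → w[i]? = w[i + p]?

/-- The smallest period of `w`. -/
noncomputable def minPeriod {α : Type*} (w : List α) : ℕ :=
  sInf {p | IsPeriod w p}

/-- `w` is periodic if its smallest period is at most `|w|/2`. -/
def Periodic {α : Type*} (w : List α) : Prop :=
  2 * minPeriod w ≤ w.length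

/-- `w` is aperiodic if its smallest period exceeds `|w|/2`. -/
def Aperiodic {α : Type*} (w : List α) : Prop :=
  w.length < 2 * minPeriod w

/-- Cyclic rotation of `w` by `i`. -/
def rot {α : Type*} (w : List α) (i : ℕ) : List α :=
  w.drop i ++ w.take i

/-- A square is a nonempty word of the form `u ++ u`. -/
def IsSq {α : Type*} (s : List α) : Prop :=
  ∃ u : List α, u ≠ [] ∧ s = u ++ u

/-- `p`-fold concatenation of the word `y`. -/
def listPow {α : Type*} (y : List α) (p : ℕ) : List α :=
  (List.replicate p y).flatten

/-- A word is primitive if it is not a `p`-th power with `p ≥ 2`. -/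
def Primitive {α : Type*} (w : List α) : Prop :=
  ¬ ∃ (y : List α) (p : ℕ), 2 ≤ p ∧ w = listPow y p

/-- The set of distinct squares occurring in the circular word `(w)`. -/
def cyclicSquares {α : Type*} (w : List α) : Set (List α) :=
  {s | IsSq s ∧ ∃ i < w.length, s <:+: rot w i}

/-- `s` occurs in `x` starting at (0-indexed) position `i`. -/
def occursAt {α : Type*} (s x : List α) (i : ℕ) : Prop :=
  (x.drop i).take s.length = s

/-- The rightmost occurrence of `s` in `x` starts at (0-indexed) position `i`. -/
def rightmostStartsAt {α : Type*} (s x : List α) (i : ℕ) : Prop :=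
  occursAt s x i ∧ ∀ j, occursAt s x j → j ≤ i

/-- `w[i..j]` with 1-indexed inclusive bounds. -/
def oneSlice {α : Type*} (w : List α) (i j : ℕ) : List α :=
  (w.drop (i - 1)).take (j - i + 1)

/-- The letters `a` and `b` of the two-letter alphabet. -/
def la : Bool := false
def lb : Bool := true

/-- The word `(ba)^m`. -/
def baPow (m : ℕ) : List Bool := (List.replicate m [lb, la]).flatten

/-- The word `(ab)^m`. -/
def abPow (m : ℕ) : List Bool := (List.replicate m [la, lb]).flatten

/-- `x_k = a (ba)^{k+1} a (ba)^{k+2}`. -/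
def xWord (k : ℕ) : List Bool := [la] ++ baPow (k + 1) ++ [la] ++ baPow (k + 2)

/-- `f_k = a(ba)^{k+1} a(ba)^{k+2} a(ba)^{k+1} a(ba)^{k+2}`. -/
def fWord (k : ℕ) : List Bool := xWord k ++ xWord k

namespace CW

variable {α : Type*}

/-- Window of the infinite word `F` starting at `i`, length `L`. -/
def win (F : ℕ → α) (i L : ℕ) : List α := (List.range L).map (fun t => F (i + t))

@[simp] lemma win_length (F : ℕ → α) (i L : ℕ) : (win F i L).length = L := by
  simp [win]

lemma win_getElem (F : ℕ → α) (i L t : ℕ) (ht : t < L) :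
    (win F i L)[t]'(by simpa using ht) = F (i + t) := by
  simp [win]

lemma win_eq_win_iff {F : ℕ → α} {i j L : ℕ} :
    win F i L = win F j L ↔ ∀ t < L, F (i + t) = F (j + t) := by
  constructor
  · intro h t ht
    have := congrArg (fun l => l[t]?) h
    simpa [win, List.getElem?_map, List.getElem?_range, ht] using this
  · intro h
    apply List.ext_getElem (by simp)
    intro t h1 h2
    have ht : t < L := by simpa using h1
    rw [win_getElem _ _ _ _ ht, win_getElem _ _ _ _ ht]
    exact h t ht

/-- `p` is a period of `F` on the interval `[a, b)`. -/
def Per (F : ℕ → α) (a b p : ℕ) : Prop := ∀ t, a ≤ t → t + p < b → F t = F (t + p)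

lemma Per.mono {F : ℕ → α} {a b b' p : ℕ} (h : Per F a b p) (hb : b' ≤ b) :
    Per F a b' p := fun t ht htb => h t ht (lt_of_lt_of_le htb hb)

/-- The "pair lemma": two squares of half-lengths `a < b < 2a` starting at `j`
force period `b - a` on the first `a` letters. -/
lemma pair {F : ℕ → α} {j a b : ℕ} (hab : a < b) (hb : b < 2 * a)
    (pa : Per F j (j + 2 * a) a) (pb : Per F j (j + 2 * b) b) :
    Per F j (j + a) (b - a) := by
  intro t ht htb
  have h1 : t + b < j + 2 * a := by omega
  have e1 : F t = F (t + b) := pb t ht (by omega)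
  have e2 : F (t + (b - a)) = F (t + (b - a) + a) := pa (t + (b - a)) (by omega) (by omega)
  have : t + (b - a) + a = t + b := by omega
  rw [e1, e2, this]

/-- Weak Fine–Wilf: periods `p` and `q` on an interval of length `≥ p + q` give
period `gcd p q`. -/
lemma fineWilf {F : ℕ → α} : ∀ N {a b p q : ℕ}, p + q ≤ N → 1 ≤ p → 1 ≤ q →
    a + p + q ≤ b → Per F a b p → Per F a b q → Per F a b (Nat.gcd p q) := by
  intro N
  induction N with
  | zero => intro a b p q h hp; omega
  | succ N ih =>
    intro a b p q hN hp hq hlen Pp Pq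
    rcases lt_trichotomy p q with hlt | heq | hgt
    · -- p < q : reduce q to q - p on [a, b - p)
      have hq' : 1 ≤ q - p := by omega
      have Pq' : Per F a (b - p) (q - p) := by
        intro t ht htb
        have e1 : F t = F (t + q) := Pq t ht (by omega)
        have e2 : F (t + (q - p)) = F (t + (q - p) + p) := Pp (t + (q - p)) (by omega) (by omega)
        have : t + (q - p) + p = t + q := by omega
        rw [e1, e2, this]
      have Pp' : Per F a (b - p) p := Pp.mono (by omega)
      have hgcd : Nat.gcd p (q - p) = Nat.gcd p q := by
        conv_rhs => rw [show q = (q - p) + p by omega]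
        rw [Nat.gcd_add_self_right]
      have IH : Per F a (b - p) (Nat.gcd p (q - p)) :=
        ih (by omega) hp hq' (by omega) Pp' Pq'
      rw [hgcd] at IH
      set g := Nat.gcd p q with hg
      have hg1 : 1 ≤ g := Nat.gcd_pos_of_pos_left _ hp
      have hgq : g ∣ q - p := by rw [← hgcd]; exact Nat.gcd_dvd_right _ _
      have hgle : g ≤ q - p := Nat.le_of_dvd hq' hgq
      intro t ht htb
      by_cases hc : t + g < b - p
      · exact IH t ht hc
      · -- t + g ≥ b - p, shift down by p
        have ht' : a + p ≤ t := by omega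
        have e1 : F (t - p) = F t := by
          have := Pp (t - p) (by omega) (by omega)
          rwa [Nat.sub_add_cancel (by omega)] at this
        have e2 : F (t + g - p) = F (t + g) := by
          have := Pp (t + g - p) (by omega) (by omega)
          rwa [Nat.sub_add_cancel (by omega)] at this
        have e3 : F (t - p) = F (t - p + g) := IH (t - p) (by omega) (by omega)
        have : t - p + g = t + g - p := by omega
        rw [← e1, e3, this, e2]
    · subst heq
      simpa using Pp
    · -- q < p : reduce p to p - q on [a, b - q)
      have hp' : 1 ≤ p - q := by omega
      have Pp' : Per F a (b - q) (p - q) := by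
        intro t ht htb
        have e1 : F t = F (t + p) := Pp t ht (by omega)
        have e2 : F (t + (p - q)) = F (t + (p - q) + q) := Pq (t + (p - q)) (by omega) (by omega)
        have : t + (p - q) + q = t + p := by omega
        rw [e1, e2, this]
      have Pq' : Per F a (b - q) q := Pq.mono (by omega)
      have hgcd : Nat.gcd (p - q) q = Nat.gcd p q := by
        conv_rhs => rw [show p = (p - q) + q by omega]
        rw [Nat.gcd_add_self_left]
      have IH : Per F a (b - q) (Nat.gcd (p - q) q) :=
        ih (by omega) hp' hq (by omega) Pp' Pq'
      rw [hgcd] at IH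
      set g := Nat.gcd p q with hg
      have hg1 : 0 < g := Nat.gcd_pos_of_pos_left _ hp
      have hgp : g ∣ p - q := by rw [← hgcd]; exact Nat.gcd_dvd_left _ _
      have hgle : g ≤ p - q := Nat.le_of_dvd (by omega) hgp
      intro t ht htb
      by_cases hc : t + g < b - q
      · exact IH t ht hc
      · have ht' : a + q ≤ t := by omega
        have e1 : F (t - q) = F t := by
          have := Pq (t - q) (by omega) (by omega)
          rwa [Nat.sub_add_cancel (by omega)] at this
        have e2 : F (t + g - q) = F (t + g) := by
          have := Pq (t + g - q) (by omega) (by omega)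
          rwa [Nat.sub_add_cancel (by omega)] at this
        have e3 : F (t - q) = F (t - q + g) := IH (t - q) (by omega) (by omega)
        have : t - q + g = t + g - q := by omega
        rw [← e1, e3, this, e2]

/-- Anchored periodicity: period `g` on `[a, b)` lets us reduce indices mod `g`. -/
lemma anchored {F : ℕ → α} {a b g : ℕ} (hg : 1 ≤ g) (P : Per F a b g) :
    ∀ t, a + t < b → F (a + t) = F (a + t % g) := by
  intro t
  induction t using Nat.strong_induction_on with
  | _ t ih =>
    intro htb
    by_cases hc : t < g
    · rw [Nat.mod_eq_of_lt hc]
    · push_neg at hc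
      have e1 : F (a + (t - g)) = F (a + t) := by
        have := P (a + (t - g)) (by omega) (by omega)
        have h2 : a + (t - g) + g = a + t := by omega
        rwa [h2] at this
      have e2 : F (a + (t - g)) = F (a + (t - g) % g) := ih (t - g) (by omega) (by omega)
      have h3 : (t - g) % g = t % g := (Nat.mod_eq_sub_mod hc).symm
      rw [← e1, e2, h3]


lemma bezout {m g : ℕ} (hm : 1 ≤ m) (hg : 1 ≤ g) :
    ∃ k t, k * m = Nat.gcd m g + t * g := by
  by_cases hdvd : g ∣ m
  · have hgcd : Nat.gcd m g = g := Nat.gcd_eq_right hdvd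
    obtain ⟨c, rfl⟩ := hdvd
    cases c with
    | zero => simp at hm
    | succ c' =>
      refine ⟨1, c', ?_⟩
      rw [hgcd]
      ring
  · have hlt : Nat.gcd m g < g := by
      rcases Nat.lt_or_ge (Nat.gcd m g) g with h | h
      · exact h
      · exfalso
        have := Nat.gcd_dvd_right m g
        have hle : Nat.gcd m g ≤ g := Nat.le_of_dvd hg this
        have heq : Nat.gcd m g = g := le_antisymm hle h
        exact hdvd (heq ▸ Nat.gcd_dvd_left m g)
    obtain ⟨c, -, hc⟩ := Nat.exists_mul_mod_eq_gcd hlt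
    refine ⟨c, m * c / g, ?_⟩
    have := Nat.div_add_mod (m * c) g
    rw [hc] at this
    have hcm : c * m = m * c := Nat.mul_comm c m
    have hgm : m * c / g * g = g * (m * c / g) := by rw [Nat.mul_comm]
    omega

lemma mod_sub_of_dvd {d y x : ℕ} (h : d ∣ y) (hyx : y ≤ x) : (x - y) % d = x % d := by
  obtain ⟨c, rfl⟩ := h
  conv_rhs => rw [show x = (x - d * c) + d * c by omega]
  rw [Nat.add_mul_mod_self_left]

/-- No three squares (half-lengths `ℓ1 < ℓ2 < ℓ3`) can all start at position `j`
when the shortest one has its rightmost occurrence there. -/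
lemma no_three (F : ℕ → α) {M j ℓ1 ℓ2 ℓ3 : ℕ}
    (h1 : 1 ≤ ℓ1) (h12 : ℓ1 < ℓ2) (h23 : ℓ2 < ℓ3)
    (o2 : j + 2 * ℓ2 ≤ M) (o3 : j + 2 * ℓ3 ≤ M)
    (p1 : Per F j (j + 2 * ℓ1) ℓ1) (p2 : Per F j (j + 2 * ℓ2) ℓ2)
    (p3 : Per F j (j + 2 * ℓ3) ℓ3)
    (rmax : ∀ j', j' + 2 * ℓ1 ≤ M → (∀ t, t < 2 * ℓ1 → F (j' + t) = F (j + t)) → j' ≤ j) :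
    False := by
  by_cases hbig : 2 * ℓ1 ≤ ℓ3
  · have hle : j + ℓ3 ≤ j := by
      refine rmax (j + ℓ3) (by omega) (fun t ht => ?_)
      have h := p3 (j + t) (by omega) (by omega)
      rw [show j + ℓ3 + t = j + t + ℓ3 by omega]
      exact h.symm
    omega
  push_neg at hbig
  obtain ⟨p, hp1, hl2⟩ : ∃ p, 1 ≤ p ∧ ℓ2 = ℓ1 + p := ⟨ℓ2 - ℓ1, by omega, by omega⟩
  obtain ⟨q, hq1, hl3⟩ : ∃ q, 1 ≤ q ∧ ℓ3 = ℓ2 + q := ⟨ℓ3 - ℓ2, by omega, by omega⟩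
  have hpq : p + q < ℓ1 := by omega
  -- pair lemmas
  have puv : Per F j (j + ℓ1) p := by
    have h := pair h12 (by omega) p1 p2
    rwa [show ℓ2 - ℓ1 = p by omega] at h
  have pvq : Per F j (j + ℓ2) q := by
    have h := pair h23 (by omega) p2 p3
    rwa [show ℓ3 - ℓ2 = q by omega] at h
  have puq : Per F j (j + ℓ1) q := pvq.mono (by omega)
  set g := Nat.gcd p q with hgdef
  have hg1 : 1 ≤ g := Nat.gcd_pos_of_pos_left _ hp1
  have hgp : g ∣ p := Nat.gcd_dvd_left _ _
  have hgq : g ∣ q := Nat.gcd_dvd_right _ _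
  have hglep : g ≤ p := Nat.le_of_dvd hp1 hgp
  have hgleq : g ≤ q := Nat.le_of_dvd hq1 hgq
  have pug : Per F j (j + ℓ1) g := fineWilf (p + q) le_rfl hp1 hq1 (by omega) puv puq
  -- period g on [j, j + ℓ1 + min p q)
  have perW : Per F j (j + ℓ1 + min p q) g := by
    intro t ht htb
    by_cases hc : t + g < j + ℓ1
    · exact pug t ht hc
    · push_neg at hc
      have h5 : j + q + 1 ≤ t := by omega
      have e1 : F (t - q) = F t := by
        have h := pvq (t - q) (by omega) (by omega)
        rwa [Nat.sub_add_cancel (by omega)] at h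
      have e2 : F (t + g - q) = F (t + g) := by
        have h := pvq (t + g - q) (by omega) (by omega)
        rwa [Nat.sub_add_cancel (by omega)] at h
      have e3 : F (t - q) = F (t - q + g) := pug (t - q) (by omega) (by omega)
      rw [← e1, e3, show t - q + g = t + g - q by omega, e2]
  have anch_g : ∀ t, t < ℓ1 → F (j + t) = F (j + t % g) :=
    fun t ht => anchored hg1 pug t (by omega)
  -- the rotation invariance (†)
  have dagger : ∀ s, s < g → F (j + s) = F (j + (s + ℓ1) % g) := by
    intro s hs
    have e1 : F (j + s) = F (j + s + ℓ1) := p1 (j + s) (by omega) (by omega)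
    have e2 : F (j + (s + ℓ1 - g)) = F (j + s + ℓ1) := by
      have h := perW (j + (s + ℓ1 - g)) (by omega) (by omega)
      rwa [show j + (s + ℓ1 - g) + g = j + s + ℓ1 by omega] at h
    have e3 : F (j + (s + ℓ1 - g)) = F (j + (s + ℓ1 - g) % g) :=
      anch_g (s + ℓ1 - g) (by omega)
    have e4 : (s + ℓ1 - g) % g = (s + ℓ1) % g := (Nat.mod_eq_sub_mod (by omega)).symm
    rw [e1, ← e2, e3, e4]
  have claimA : ∀ k, ∀ s, s < g → F (j + s) = F (j + (s + k * ℓ1) % g) := by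
    intro k
    induction k with
    | zero => intro s hs; simp [Nat.mod_eq_of_lt hs]
    | succ k ih =>
      intro s hs
      have e1 := dagger s hs
      have hs' : (s + ℓ1) % g < g := Nat.mod_lt _ (by omega)
      have e2 := ih ((s + ℓ1) % g) hs'
      have e3 : ((s + ℓ1) % g + k * ℓ1) % g = (s + (k + 1) * ℓ1) % g := by
        rw [Nat.mod_add_mod, show s + ℓ1 + k * ℓ1 = s + (k + 1) * ℓ1 by ring]
      rw [e1, e2, e3]
  set d := Nat.gcd ℓ1 g with hddef
  have hd1 : 1 ≤ d := Nat.gcd_pos_of_pos_left _ h1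
  have hdl1 : d ∣ ℓ1 := Nat.gcd_dvd_left _ _
  have hdg : d ∣ g := Nat.gcd_dvd_right _ _
  have hdleg : d ≤ g := Nat.le_of_dvd (by omega) hdg
  have hdp : d ∣ p := hdg.trans hgp
  have hdq : d ∣ q := hdg.trans hgq
  have hdlep : d ≤ p := le_trans hdleg hglep
  -- invariance under +d mod g
  have hInv : ∀ s, s < g → F (j + s) = F (j + (s + d) % g) := by
    obtain ⟨k0, t0, hb⟩ := bezout h1 hg1
    intro s hs
    have e1 := claimA k0 s hs
    have e2 : s + k0 * ℓ1 = s + d + t0 * g := by omega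
    rw [e1, e2, Nat.add_mul_mod_self_right]
  have reach : ∀ i, ∀ s, s < g → F (j + s) = F (j + (s + i * d) % g) := by
    intro i
    induction i with
    | zero => intro s hs; simp [Nat.mod_eq_of_lt hs]
    | succ i ih =>
      intro s hs
      have e1 := hInv s hs
      have hs' : (s + d) % g < g := Nat.mod_lt _ (by omega)
      have e2 := ih ((s + d) % g) hs'
      have e3 : ((s + d) % g + i * d) % g = (s + (i + 1) * d) % g := by
        rw [Nat.mod_add_mod, show s + d + i * d = s + (i + 1) * d by ring]
      rw [e1, e2, e3]
  -- anchoring mod d on [0, g)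
  have anchd : ∀ s, s < g → F (j + s) = F (j + s % d) := by
    intro s hs
    set g' := g / d with hg'def
    have e3 : d * g' = g := Nat.mul_div_cancel' hdg
    have hg'1 : 1 ≤ g' := by
      rcases Nat.eq_zero_or_pos g' with h | h
      · exfalso; rw [h, Nat.mul_zero] at e3; omega
      · exact h
    set q2 := s / d / g' with hq2def
    set rr := s / d % g' with hrrdef
    have e2 : g' * q2 + rr = s / d := Nat.div_add_mod (s / d) g'
    have hrr : rr < g' := Nat.mod_lt _ (by omega)
    have e1 : d * (s / d) + s % d = s := Nat.div_add_mod s d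
    set i := g' - rr with hidef
    have h4 : s / d + i = g' * (q2 + 1) := by
      rw [Nat.mul_add, Nat.mul_one]; omega
    have h6 : d * (s / d) + d * i = g * (q2 + 1) := by
      rw [← Nat.mul_add, h4, ← Nat.mul_assoc, e3]
    have h5 : s + i * d = s % d + g * (q2 + 1) := by
      have : i * d = d * i := Nat.mul_comm i d
      omega
    have e5 := reach i s hs
    rw [e5, h5, Nat.add_mul_mod_self_left, Nat.mod_eq_of_lt (by
      have : s % d < d := Nat.mod_lt _ (by omega)
      omega)]
  have anch_d : ∀ t, t < ℓ1 → F (j + t) = F (j + t % d) := by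
    intro t ht
    rw [anch_g t ht, anchd (t % g) (Nat.mod_lt _ (by omega)), Nat.mod_mod_of_dvd t hdg]
  have anch2 : ∀ t, t < 2 * ℓ1 → F (j + t) = F (j + t % d) := by
    intro t ht
    by_cases hc : t < ℓ1
    · exact anch_d t hc
    · push_neg at hc
      have e1 : F (j + (t - ℓ1)) = F (j + t) := by
        have h := p1 (j + (t - ℓ1)) (by omega) (by omega)
        rwa [show j + (t - ℓ1) + ℓ1 = j + t by omega] at h
      rw [← e1, anch_d (t - ℓ1) (by omega), mod_sub_of_dvd hdl1 hc]
  -- the square of half-length ℓ1 reoccurs at j + d : contradiction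
  have hre : j + d ≤ j := by
    refine rmax (j + d) (by omega) (fun t ht => ?_)
    rw [anch2 t ht]
    by_cases hc : d + t < 2 * ℓ1
    · have h := anch2 (d + t) hc
      rw [show j + d + t = j + (d + t) by omega, h, Nat.add_mod_left]
    · push_neg at hc
      have hdl2 : d ∣ ℓ2 := by rw [hl2]; exact Nat.dvd_add hdl1 hdp
      have e1 : F (j + (d + t - ℓ2)) = F (j + d + t) := by
        have h := p2 (j + (d + t - ℓ2)) (by omega) (by omega)
        rwa [show j + (d + t - ℓ2) + ℓ2 = j + d + t by omega] at h
      have hi0 : d + t - ℓ2 < ℓ1 := by omega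
      rw [← e1, anch_d (d + t - ℓ2) hi0, mod_sub_of_dvd hdl2 (by omega),
        show (d + t) % d = t % d from Nat.add_mod_left d t]
  omega


/-- `s` occurs (as a window) at position `j` in the frame `(F, M)`. -/
def Occ (F : ℕ → α) (M : ℕ) (s : List α) (j : ℕ) : Prop :=
  j + s.length ≤ M ∧ s = win F j s.length

/-- Main counting lemma: distinct squares occurring in the frame `(F, M)` number at
most `2(M-1) - L`, provided at positions `< L` at most one square is rightmost. -/
lemma count_main (F : ℕ → α) (M L K : ℕ) (S : Set (List α))
    (hM : 2 ≤ M) (hLM : L ≤ M - 1)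
    (hlen : ∀ s ∈ S, ∃ ℓ, 1 ≤ ℓ ∧ s.length = 2 * ℓ ∧ 2 * ℓ ≤ K)
    (hocc : ∀ s ∈ S, ∃ j, Occ F M s j)
    (hper : ∀ s ∈ S, ∀ j ℓ, s.length = 2 * ℓ → Occ F M s j → Per F j (j + 2 * ℓ) ℓ)
    (hone : ∀ j, j < L → ∀ ℓ1 ℓ2, 1 ≤ ℓ1 → ℓ1 < ℓ2 → 2 * ℓ2 ≤ K →
      j + 2 * ℓ2 ≤ M → Per F j (j + 2 * ℓ1) ℓ1 → Per F j (j + 2 * ℓ2) ℓ2 →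
      (∀ j', j' + 2 * ℓ1 ≤ M → (∀ t, t < 2 * ℓ1 → F (j' + t) = F (j + t)) → j' ≤ j) →
      False) :
    S.ncard ≤ 2 * (M - 1) - L := by
  classical
  -- the rightmost occurrence position
  set rmf : List α → ℕ := fun s => Nat.findGreatest (fun j => Occ F M s j) M with hrmf
  have occ_rmf : ∀ s ∈ S, Occ F M s (rmf s) := by
    intro s hs
    obtain ⟨j, hj⟩ := hocc s hs
    obtain ⟨ℓ, hℓ1, hℓ, hℓK⟩ := hlen s hs
    have hb := hj.1
    exact Nat.findGreatest_spec (m := j) (by omega) hj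
  have le_rmf : ∀ s ∈ S, ∀ j, Occ F M s j → j ≤ rmf s := by
    intro s hs j hj
    obtain ⟨ℓ, hℓ1, hℓ, hℓK⟩ := hlen s hs
    have hb := hj.1
    exact Nat.le_findGreatest (by omega) hj
  have rmf_le : ∀ s ∈ S, rmf s ≤ M - 2 := by
    intro s hs
    obtain ⟨ℓ, hℓ1, hℓ, hℓK⟩ := hlen s hs
    have h := (occ_rmf s hs).1
    omega
  -- rightmost property in the `rmax` form
  have rmax_of : ∀ s ∈ S, ∀ ℓ, s.length = 2 * ℓ →
      ∀ j', j' + 2 * ℓ ≤ M → (∀ t, t < 2 * ℓ → F (j' + t) = F (rmf s + t)) →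
      j' ≤ rmf s := by
    intro s hs ℓ hℓ j' hj' hvals
    refine le_rmf s hs j' ⟨by omega, ?_⟩
    have h2 : s = win F (rmf s) s.length := (occ_rmf s hs).2
    rw [hℓ] at h2 ⊢
    exact h2.trans (win_eq_win_iff.2 hvals).symm
  -- same position, same length ⇒ equal
  have key1 : ∀ s ∈ S, ∀ s' ∈ S, rmf s = rmf s' → s.length = s'.length → s = s' := by
    intro s hs s' hs' hr hl
    have h1 := (occ_rmf s hs).2
    have h2 := (occ_rmf s' hs').2
    rw [h1, h2, hl, hr]
  -- no three squares rightmost at the same position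
  have key3 : ∀ s1 ∈ S, ∀ s2 ∈ S, ∀ s3 ∈ S, rmf s1 = rmf s2 → rmf s2 = rmf s3 →
      s1.length < s2.length → s2.length < s3.length → False := by
    intro s1 h1 s2 h2 s3 h3 hr12 hr23 hl12 hl23
    obtain ⟨ℓ1, hℓ11, hℓ1, hℓ1K⟩ := hlen s1 h1
    obtain ⟨ℓ2, hℓ21, hℓ2, hℓ2K⟩ := hlen s2 h2
    obtain ⟨ℓ3, hℓ31, hℓ3, hℓ3K⟩ := hlen s3 h3
    set j := rmf s1 with hj
    have o1 := occ_rmf s1 h1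
    have o2 := occ_rmf s2 h2
    have o3 := occ_rmf s3 h3
    rw [← hr12] at o2
    rw [← hr23, ← hr12] at o3
    refine no_three F (M := M) (j := j) (ℓ1 := ℓ1) (ℓ2 := ℓ2) (ℓ3 := ℓ3)
      hℓ11 (by omega) (by omega) (by have := o2.1; omega) (by have := o3.1; omega)
      (hper s1 h1 j ℓ1 hℓ1 o1) (hper s2 h2 j ℓ2 hℓ2 o2) (hper s3 h3 j ℓ3 hℓ3 o3) ?_
    intro j' hb hv
    exact rmax_of s1 h1 ℓ1 hℓ1 j' hb hv
  -- no two squares rightmost at a position `< L`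
  have key2 : ∀ s ∈ S, ∀ s' ∈ S, rmf s = rmf s' → rmf s < L →
      s.length < s'.length → False := by
    intro s hs s' hs' hr hL hl
    obtain ⟨ℓ1, hℓ11, hℓ1, hℓ1K⟩ := hlen s hs
    obtain ⟨ℓ2, hℓ21, hℓ2, hℓ2K⟩ := hlen s' hs'
    have o1 := occ_rmf s hs
    have o2 := occ_rmf s' hs'
    rw [← hr] at o2
    exact hone (rmf s) hL ℓ1 ℓ2 hℓ11 (by omega) (by omega) (by have := o2.1; omega)
      (hper s hs _ ℓ1 hℓ1 o1) (hper s' hs' _ ℓ2 hℓ2 o2)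
      (fun j' hb hv => rmax_of s hs ℓ1 hℓ1 j' hb hv)
  -- the flag: is `s` the longest square rightmost at its position?
  set flagP : List α → Prop :=
    fun s => ∀ s' ∈ S, rmf s' = rmf s → s'.length ≤ s.length with hflagP
  set flag : List α → Bool := fun s => decide (flagP s) with hflag
  have flag_iff : ∀ s, flag s = true ↔ flagP s := by
    intro s; rw [hflag]; exact decide_eq_true_iff
  have flag_false : ∀ s, flag s = false ↔ ¬ flagP s := by
    intro s; rw [hflag]; exact decide_eq_false_iff_not
  set Φ : List α → ℕ × Bool := fun s => (rmf s, flag s) with hΦ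
  set T : Finset (ℕ × Bool) :=
    (Finset.range (M - 1) ×ˢ (Finset.univ : Finset Bool)) \ (Finset.range L ×ˢ {false})
    with hT
  have main : ∀ a ∈ S, ∀ b ∈ S, rmf a = rmf b → flag a = flag b →
      a.length < b.length → False := by
    intro a ha b hb hrab hfab hlab
    by_cases hfa : flag a = true
    · have hPa := (flag_iff a).1 hfa
      have := hPa b hb hrab.symm
      omega
    · have hfa' : flag a = false := by
        cases h : flag a
        · rfl
        · exact absurd h hfa
      have hfb : flag b = false := by rw [← hfab]; exact hfa'
      have hPb := (flag_false b).1 hfb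
      simp only [hflagP] at hPb
      push_neg at hPb
      obtain ⟨c, hc, hrc, hlc⟩ := hPb
      exact key3 a ha b hb c hc hrab hrc.symm hlab hlc
  have hinj : Set.InjOn Φ S := by
    intro s hs s' hs' heq
    by_contra hne
    have hr : rmf s = rmf s' := congrArg Prod.fst heq
    have hfl : flag s = flag s' := congrArg Prod.snd heq
    have hlne : s.length ≠ s'.length := fun h => hne (key1 s hs s' hs' hr h)
    rcases lt_or_gt_of_ne hlne with h | h
    · exact main s hs s' hs' hr hfl h
    · exact main s' hs' s hs hr.symm hfl.symm h
  have hmaps : ∀ s ∈ S, Φ s ∈ T := by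
    intro s hs
    rw [hT]
    simp only [Finset.mem_sdiff, Finset.mem_product, Finset.mem_range, Finset.mem_univ,
      Finset.mem_singleton, and_true, not_and]
    refine ⟨by have := rmf_le s hs; show rmf s < M - 1; omega, ?_⟩
    intro hL hfalse
    have hPs := (flag_false s).1 hfalse
    simp only [hflagP] at hPs
    push_neg at hPs
    obtain ⟨c, hc, hrc, hlc⟩ := hPs
    exact key2 s hs c hc hrc.symm hL hlc
  have hTcard : T.card = 2 * (M - 1) - L := by
    rw [hT, Finset.card_sdiff_of_subset]
    · rw [Finset.card_product, Finset.card_product, Finset.card_range, Finset.card_range,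
        Finset.card_univ, Fintype.card_bool, Finset.card_singleton]
      omega
    · intro x hx
      simp only [Finset.mem_product, Finset.mem_range, Finset.mem_singleton] at hx
      simp only [Finset.mem_product, Finset.mem_range, Finset.mem_univ]
      exact ⟨by omega, trivial⟩
  have himg : Φ '' S ⊆ ↑T := by
    rintro _ ⟨s, hs, rfl⟩
    exact hmaps s hs
  calc S.ncard = (Φ '' S).ncard := (Set.ncard_image_of_injOn hinj).symm
    _ ≤ (↑T : Set (ℕ × Bool)).ncard := Set.ncard_le_ncard himg T.finite_toSet
    _ = T.card := Set.ncard_coe_finset T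
    _ = 2 * (M - 1) - L := hTcard


/-- Global period of an infinite word. -/
def GPer (f : ℕ → α) (P : ℕ) : Prop := ∀ t, f (t + P) = f t

lemma gper_iter {f : ℕ → α} {P : ℕ} (h : GPer f P) : ∀ k x, f (x + k * P) = f x := by
  intro k
  induction k with
  | zero => simp
  | succ k ih =>
    intro x
    have e1 : x + (k + 1) * P = (x + k * P) + P := by ring
    rw [e1, h (x + k * P), ih x]

lemma gper_mod {f : ℕ → α} {P : ℕ} (hP : 1 ≤ P) (h : GPer f P) {x y : ℕ}
    (hxy : x % P = y % P) : f x = f y := by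
  have e1 : x = x % P + (x / P) * P := by
    have h1 := Nat.div_add_mod x P
    have h2 : x / P * P = P * (x / P) := Nat.mul_comm _ _
    omega
  have e2 : y = y % P + (y / P) * P := by
    have h1 := Nat.div_add_mod y P
    have h2 : y / P * P = P * (y / P) := Nat.mul_comm _ _
    omega
  rw [e1, e2, gper_iter h, gper_iter h, hxy]

lemma gper_gcd {f : ℕ → α} {P Q : ℕ} (hP : 1 ≤ P) (hQ : 1 ≤ Q)
    (hp : GPer f P) (hq : GPer f Q) : GPer f (Nat.gcd P Q) := by
  obtain ⟨k, t, hb⟩ := bezout hP hQ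
  intro x
  have e1 : f (x + Nat.gcd P Q + t * Q) = f (x + Nat.gcd P Q) := gper_iter hq t _
  have e2 : x + Nat.gcd P Q + t * Q = x + k * P := by omega
  have e3 : f (x + k * P) = f x := gper_iter hp k x
  rw [← e1, e2, e3]

lemma per_chain {f : ℕ → α} {a b g : ℕ} (P : Per f a b g) :
    ∀ k x, a ≤ x → x + g * k < b → f x = f (x + g * k) := by
  intro k
  induction k with
  | zero => simp
  | succ k ih =>
    intro x hx hb
    have hmul : g * k + g = g * (k + 1) := by ring
    have e1 : f x = f (x + g * k) := ih x hx (by omega)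
    have e2 : f (x + g * k) = f (x + g * k + g) := P (x + g * k) (by omega) (by omega)
    rw [e1, e2]
    congr 1
    omega


lemma per_congr {f : ℕ → α} {a b g : ℕ} (hg : 1 ≤ g) (P : Per f a b g) {x y : ℕ}
    (hax : a ≤ x) (hay : a ≤ y) (hbx : x < b) (hby : y < b)
    (hmod : x % g = y % g) : f x = f y := by
  have key : ∀ u v, a ≤ u → u < b → v < b → u ≤ v → u % g = v % g → f u = f v := by
    intro u v hau hub hvb huv hm
    obtain ⟨k, hk⟩ : ∃ k, v - u = g * k := by
      have h1 := Nat.div_add_mod u g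
      have h2 := Nat.div_add_mod v g
      have h3 : u / g ≤ v / g := Nat.div_le_div_right huv
      have h4 : g * (v / g - u / g) = g * (v / g) - g * (u / g) :=
        Nat.mul_sub_left_distrib _ _ _
      exact ⟨v / g - u / g, by omega⟩
    have := per_chain P k u hau (by omega)
    rw [show u + g * k = v from by omega] at this
    exact this
  rcases le_total x y with h | h
  · exact key x y hax hbx hby h hmod
  · exact (key y x hay hby hbx h hmod.symm).symm

/-- The gluing lemma: if every window of length `lam` has a period `≤ h`
(with `2h + 1 ≤ lam`), the whole infinite word has a period `≤ h`. -/
lemma glue (f : ℕ → α) (lam h : ℕ) (hh : 2 * h + 1 ≤ lam)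
    (hyp : ∀ j, ∃ p, 1 ≤ p ∧ p ≤ h ∧ Per f j (j + lam) p) :
    ∃ p, 1 ≤ p ∧ p ≤ h ∧ GPer f p := by
  classical
  obtain ⟨p, hp1, hph, hp⟩ := hyp 0
  refine ⟨p, hp1, hph, ?_⟩
  by_contra hcon
  simp only [GPer] at hcon
  push_neg at hcon
  have hex : ∃ t, f (t + p) ≠ f t := hcon
  set t0 := Nat.find hex with ht0
  have hspec : f (t0 + p) ≠ f t0 := Nat.find_spec hex
  have hmin : ∀ t, t < t0 → f (t + p) = f t := by
    intro t ht
    by_contra hc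
    exact Nat.find_min hex ht hc
  have ht0lam : lam ≤ t0 + p := by
    by_contra hc
    push_neg at hc
    exact hspec (hp t0 (by omega) (by omega)).symm
  set j := t0 + p + 1 - lam with hj
  obtain ⟨r, hr1, hrh, hr⟩ := hyp j
  have hI : Per f j (t0 + p) p := by
    intro t ht htb
    exact (hmin t (by omega)).symm
  have hIr : Per f j (t0 + p) r := hr.mono (by omega)
  have hfw : Per f j (t0 + p) (Nat.gcd p r) :=
    fineWilf (p + r) le_rfl hp1 hr1 (by omega) hI hIr
  have hg1 : 1 ≤ Nat.gcd p r := Nat.gcd_pos_of_pos_left _ hp1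
  have hgp : Nat.gcd p r ∣ p := Nat.gcd_dvd_left _ _
  have hgr : Nat.gcd p r ∣ r := Nat.gcd_dvd_right _ _
  have e1 : f (t0 + p - r) = f (t0 + p) := by
    have hrr := hr (t0 + p - r) (by omega) (by omega)
    rwa [Nat.sub_add_cancel (by omega)] at hrr
  have e2 : f (t0 + p - r) = f t0 := by
    refine per_congr hg1 hfw (by omega) (by omega) (by omega) (by omega) ?_
    set g := Nat.gcd p r
    rcases le_total r p with hc | hc
    · obtain ⟨k, hk⟩ : ∃ k, p - r = g * k := Nat.dvd_sub hgp hgr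
      rw [show t0 + p - r = t0 + g * k from by omega, Nat.add_mul_mod_self_left]
    · obtain ⟨k, hk⟩ : ∃ k, r - p = g * k := Nat.dvd_sub hgr hgp
      conv_rhs => rw [show t0 = t0 + p - r + g * k from by omega]
      rw [Nat.add_mul_mod_self_left]
  exact hspec (by rw [← e1, e2])

/-- Alignment: there is an index congruent to `x` mod `P` in `[a, a + P)`. -/
lemma exists_align (P a x : ℕ) (hP : 1 ≤ P) : ∃ j, a ≤ j ∧ j < a + P ∧ j % P = x % P := by
  have hd := Nat.div_add_mod a P
  have hm : a % P < P := Nat.mod_lt _ (by omega)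
  have hx : x % P < P := Nat.mod_lt _ (by omega)
  have hmod0 : (x % P + a / P * P) % P = x % P := by
    rw [Nat.add_mul_mod_self_right, Nat.mod_mod_of_dvd _ (dvd_refl P)]
  have hPa : a / P * P = P * (a / P) := Nat.mul_comm _ _
  by_cases hc : a ≤ x % P + a / P * P
  · exact ⟨x % P + a / P * P, hc, by omega, hmod0⟩
  · refine ⟨x % P + a / P * P + P, by omega, by omega, ?_⟩
    rw [Nat.add_mod_right, hmod0]


lemma win_drop (F : ℕ → α) (a L k : ℕ) :
    (win F a L).drop k = win F (a + k) (L - k) := by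
  apply List.ext_getElem (by simp)
  intro j h1 h2
  have hj : j < L - k := by simpa using h2
  rw [List.getElem_drop, win_getElem _ _ _ _ (by omega), win_getElem _ _ _ _ hj]
  congr 1
  omega

lemma win_take (F : ℕ → α) (a L c : ℕ) (hc : c ≤ L) :
    (win F a L).take c = win F a c := by
  apply List.ext_getElem (by simp; omega)
  intro j h1 h2
  have hj : j < c := by simpa using h2
  rw [List.getElem_take, win_getElem _ _ _ _ (by omega), win_getElem _ _ _ _ hj]

lemma eq_win_of_infix {F : ℕ → α} {a L : ℕ} {s : List α} (h : s <:+: win F a L) :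
    ∃ k, k + s.length ≤ L ∧ s = win F (a + k) s.length := by
  obtain ⟨t, u, ht⟩ := h
  have hlen : t.length + s.length + u.length = L := by
    have h0 := congrArg List.length ht
    simp at h0
    omega
  refine ⟨t.length, by omega, ?_⟩
  have h1 : t ++ (s ++ u) = win F a L := by rw [← List.append_assoc]; exact ht
  have h2 : s ++ u = (win F a L).drop t.length := by
    rw [← h1, List.drop_left]
  have h3 : s = (s ++ u).take s.length := (List.take_left (l₁ := s) (l₂ := u)).symm
  have h4 : s = (win F (a + t.length) (L - t.length)).take s.length := by
    conv_lhs => rw [h3, h2, win_drop]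
  have h5 := win_take F (a + t.length) (L - t.length) s.length (by omega)
  conv_lhs => rw [h4, h5]

/-- A square word occurring as a window forces a period. -/
lemma per_of_sq {F : ℕ → α} {j : ℕ} {u : List α}
    (hw : u ++ u = win F j (2 * u.length)) : Per F j (j + 2 * u.length) u.length := by
  intro x hx hxb
  set L := u.length with hL
  set i := x - j with hi
  have hiL : i + L < 2 * L := by omega
  have hall : ∀ idx, idx < 2 * L → ∀ (hidx : idx < (u ++ u).length),
      (u ++ u)[idx] = F (j + idx) := by
    intro idx hidx hidx'
    have h5 := List.getElem_of_eq hw hidx'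
    rw [h5, win_getElem _ _ _ _ (by omega)]
  have e1 : (u ++ u)[i]'(by simp; omega) = (u ++ u)[i + L]'(by simp; omega) := by
    rw [List.getElem_append_left (by omega), List.getElem_append_right (by omega)]
    congr 1
    omega
  have e2 := hall i (by omega) (by simp; omega)
  have e3 := hall (i + L) (by omega) (by simp; omega)
  have e4 : F (j + i) = F (j + (i + L)) := by rw [← e2, e1, e3]
  rw [show j + i = x from by omega, show j + (i + L) = x + L from by omega] at e4
  exact e4

section Circ

variable {w : List α} (hw : w ≠ [])

/-- The circular infinite word determined by `w`. -/
def fcirc (w : List α) (hw : w ≠ []) : ℕ → α :=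
  fun t => w.get ⟨t % w.length, Nat.mod_lt _ (List.length_pos_iff.2 hw)⟩

lemma fcirc_mod {x y : ℕ} (h : x % w.length = y % w.length) :
    fcirc w hw x = fcirc w hw y := by
  unfold fcirc
  congr 1
  exact Fin.ext h

lemma gper_fcirc : GPer (fcirc w hw) w.length :=
  fun t => fcirc_mod hw (Nat.add_mod_right t _)

lemma rot_eq_win {i : ℕ} (hi : i ≤ w.length) :
    rot w i = win (fcirc w hw) i w.length := by
  have hn : 0 < w.length := List.length_pos_iff.2 hw
  have hdl : (w.drop i).length = w.length - i := by simp
  apply List.ext_getElem?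
  intro j
  by_cases hj : j < w.length
  · have hwin : (win (fcirc w hw) i w.length)[j]? = some (fcirc w hw (i + j)) := by
      simp [win, List.getElem?_map, List.getElem?_range, hj]
    have hfcirc : ∀ k, k < w.length → (i + j) % w.length = k →
        some (fcirc w hw (i + j)) = w[k]? := by
      intro k hk hmod
      subst hmod
      rw [List.getElem?_eq_getElem hk]
      rfl
    rw [hwin]
    show (rot w i)[j]? = _
    unfold rot
    by_cases hc : j < w.length - i
    · rw [List.getElem?_append_left (by omega), List.getElem?_drop]
      exact (hfcirc (i + j) (by omega) (Nat.mod_eq_of_lt (by omega))).symm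
    · push_neg at hc
      rw [List.getElem?_append_right (by omega), List.getElem?_take_of_lt (by omega)]
      rw [show j - (List.drop i w).length = i + j - w.length from by simp; omega]
      refine (hfcirc (i + j - w.length) (by omega) ?_).symm
      rw [Nat.mod_eq_sub_mod (by omega)]
      exact Nat.mod_eq_of_lt (by omega)
  · push_neg at hj
    rw [List.getElem?_eq_none (by simp [rot]; omega), List.getElem?_eq_none (by simp; omega)]

/-- Structure of members of `cyclicSquares`. -/
lemma cyclic_mem {s : List α} (hs : s ∈ cyclicSquares w) :
    ∃ ℓ j, 1 ≤ ℓ ∧ s.length = 2 * ℓ ∧ 2 * ℓ ≤ w.length ∧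
      s = win (fcirc w hw) j (2 * ℓ) := by
  obtain ⟨⟨u, hu, hsu⟩, i, hi, hinf⟩ := hs
  have hul : 1 ≤ u.length := List.length_pos_iff.2 hu
  have hsl : s.length = 2 * u.length := by rw [hsu]; simp [List.length_append]; omega
  rw [rot_eq_win hw (le_of_lt hi)] at hinf
  obtain ⟨k, hk, hkw⟩ := eq_win_of_infix hinf
  exact ⟨u.length, i + k, hul, hsl, by omega, by rw [← hsl]; exact hkw⟩

/-- Periods at any window occurrence of a member. -/
lemma cyclic_per {s : List α} (hs : s ∈ cyclicSquares w) {F : ℕ → α} {j ℓ : ℕ}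
    (hl : s.length = 2 * ℓ) (hocc : s = win F j (2 * ℓ)) :
    Per F j (j + 2 * ℓ) ℓ := by
  obtain ⟨⟨u, hu, hsu⟩, -⟩ := hs
  have hul : s.length = 2 * u.length := by rw [hsu]; simp [List.length_append]; omega
  have hℓu : ℓ = u.length := by omega
  subst hℓu
  exact per_of_sq (by rw [← hsu]; exact hocc)

end Circ


lemma win_shift (f : ℕ → α) (i a m : ℕ) :
    win (fun t => f (i + t)) a m = win f (i + a) m := by
  apply List.ext_getElem (by simp)
  intro t h1 h2
  have ht : t < m := by simpa using h1
  rw [win_getElem _ _ _ _ ht, win_getElem _ _ _ _ ht]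
  congr 1
  omega

lemma gper_win {f : ℕ → α} {P : ℕ} (hP : 1 ≤ P) (h : GPer f P) {a b : ℕ}
    (hab : a % P = b % P) (m : ℕ) : win f a m = win f b m := by
  refine win_eq_win_iff.2 fun t ht => gper_mod hP h ?_
  exact Nat.ModEq.add_right t hab

end CW

open CW in
/-- A circular word of length `n` contains at most `3.75n` distinct squares. -/
theorem stmt18 {α : Type*} (w : List α) :
    4 * (cyclicSquares w).ncard ≤ 15 * w.length := by
  classical
  by_cases hw : w = []
  · subst hw
    have he : cyclicSquares ([] : List α) = ∅ := by
      ext s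
      simp [cyclicSquares]
    rw [he]
    simp
  -- setup
  set n := w.length with hn
  have hn1 : 1 ≤ n := List.length_pos_iff.2 hw
  set f := fcirc w hw with hf
  set S := cyclicSquares w with hS
  -- trivial bound and finiteness
  set T0 : Finset (List α) :=
    (Finset.range n ×ˢ Finset.Icc 1 (n / 2)).image (fun pr => win f pr.1 (2 * pr.2)) with hT0
  have hsub : S ⊆ ↑T0 := by
    intro s hs
    obtain ⟨ℓ, j, hℓ1, hsl, hln, hsw⟩ := cyclic_mem hw hs
    have hnorm : win f j (2 * ℓ) = win f (j % n) (2 * ℓ) :=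
      gper_win hn1 (gper_fcirc hw) (by rw [Nat.mod_mod_of_dvd _ (dvd_refl n)]) _
    simp only [hT0, Finset.coe_image, Set.mem_image, Finset.mem_coe, Finset.mem_product]
    refine ⟨(j % n, ℓ), ?_, ?_⟩
    · simp only [Finset.mem_product, Finset.mem_range, Finset.mem_Icc]
      exact ⟨Nat.mod_lt _ (by omega), hℓ1, by omega⟩
    · rw [← hnorm, ← hsw]
  have hfin : S.Finite := Set.Finite.subset T0.finite_toSet hsub
  have htriv : S.ncard ≤ n * (n / 2) := by
    calc S.ncard ≤ (↑T0 : Set (List α)).ncard := Set.ncard_le_ncard hsub T0.finite_toSet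
      _ = T0.card := Set.ncard_coe_finset T0
      _ ≤ ((Finset.range n ×ˢ Finset.Icc 1 (n / 2))).card := Finset.card_image_le
      _ = n * (n / 2) := by
        rw [Finset.card_product, Finset.card_range, Nat.card_Icc, Nat.add_sub_cancel]
  by_cases hn7 : n ≤ 7
  · have h2 : n / 2 ≤ 3 := by omega
    have : S.ncard ≤ n * 3 := le_trans htriv (Nat.mul_le_mul_left n h2)
    calc 4 * S.ncard ≤ 4 * (n * 3) := Nat.mul_le_mul_left 4 this
      _ ≤ 15 * n := by omega
  push_neg at hn7
  -- n ≥ 8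
  set L := n / 4 with hL
  have hL2 : 2 ≤ L := by omega
  have hL4 : 4 * L ≤ n := by omega
  have hLn : L ≤ n := by omega
  set hh := (L - 1) / 2 with hhdef
  -- membership data, reusable
  have hmem : ∀ s ∈ S, ∃ ℓ j, 1 ≤ ℓ ∧ s.length = 2 * ℓ ∧ 2 * ℓ ≤ n ∧
      s = win f j (2 * ℓ) := fun s hs => cyclic_mem hw hs
  have hperS : ∀ s ∈ S, ∀ (F : ℕ → α) j ℓ, s.length = 2 * ℓ → s = win F j (2 * ℓ) →
      Per F j (j + 2 * ℓ) ℓ := fun s hs F j ℓ h1 h2 =>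
        cyclic_per (w := w) (show s ∈ cyclicSquares w from hs) h1 h2
  by_cases CA : ∀ j, ∃ p, 1 ≤ p ∧ p ≤ hh ∧ Per f j (j + L) p
  · -- CASE A : all windows periodic ⇒ small global period
    obtain ⟨p0, hp01, hp0h, gp0⟩ := glue f L hh (by omega) CA
    have gpn : GPer f n := gper_fcirc hw
    set D := {q | 1 ≤ q ∧ q ∣ n ∧ GPer f q} with hD
    have hDmem : Nat.gcd p0 n ∈ D :=
      ⟨Nat.gcd_pos_of_pos_left _ hp01, Nat.gcd_dvd_right _ _,
        gper_gcd hp01 hn1 gp0 gpn⟩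
    set q := sInf D with hq
    obtain ⟨hq1, hqn, gq⟩ : q ∈ D := Nat.sInf_mem ⟨_, hDmem⟩
    have hqle : q ≤ hh := by
      have h1 : q ≤ Nat.gcd p0 n := Nat.sInf_le hDmem
      have h2 : Nat.gcd p0 n ≤ p0 := Nat.le_of_dvd (by omega) (Nat.gcd_dvd_left _ _)
      omega
    -- split into short and long squares
    set Ss := {s ∈ S | s.length ≤ 2 * q} with hSs
    set Sl := {s ∈ S | ¬ s.length ≤ 2 * q} with hSl
    have hsplit : S = Ss ∪ Sl := by
      ext s
      constructor
      · intro hs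
        by_cases hc : s.length ≤ 2 * q
        · exact Or.inl ⟨hs, hc⟩
        · exact Or.inr ⟨hs, hc⟩
      · rintro (⟨hs, -⟩ | ⟨hs, -⟩) <;> exact hs
    -- short squares
    have hshort : Ss.ncard ≤ 2 * (3 * q - 1) := by
      have hcount := count_main f (3 * q) 0 (2 * q) Ss (by omega) (by omega)
        ?_ ?_ ?_ (by omega)
      · simpa using hcount
      · intro s hs
        obtain ⟨ℓ, j, hℓ1, hsl, hln, hsw⟩ := hmem s hs.1
        exact ⟨ℓ, hℓ1, hsl, by have := hs.2; omega⟩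
      · intro s hs
        obtain ⟨ℓ, j, hℓ1, hsl, hln, hsw⟩ := hmem s hs.1
        have h2q : 2 * ℓ ≤ 2 * q := by have := hs.2; omega
        refine ⟨j % q, ⟨?_, ?_⟩⟩
        · have := Nat.mod_lt j (show 0 < q by omega)
          omega
        · rw [hsl, hsw]
          exact gper_win hq1 gq ((Nat.mod_mod_of_dvd j (dvd_refl q)).symm) _
      · intro s hs j ℓ h1 h2
        exact hperS s hs.1 f j ℓ h1 (by rw [← h1]; exact h2.2)
    -- long squares
    have hqdvd : ∀ s ∈ Sl, ∀ ℓ j, s.length = 2 * ℓ → s = win f j (2 * ℓ) → q ∣ ℓ := by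
      intro s hs ℓ j hsl hsw
      have hℓq : q < ℓ := by
        have h2 := hs.2
        omega
      have hperℓ : Per f j (j + 2 * ℓ) ℓ := hperS s hs.1 f j ℓ hsl hsw
      have hperq : Per f j (j + 2 * ℓ) q := fun t ht htb => (gq t).symm
      have hfw : Per f j (j + 2 * ℓ) (Nat.gcd ℓ q) :=
        fineWilf (ℓ + q) le_rfl (by omega) hq1 (by omega) hperℓ hperq
      set g' := Nat.gcd ℓ q with hg'
      have hg'q : g' ∣ q := Nat.gcd_dvd_right _ _
      have hg'1 : 1 ≤ g' := Nat.gcd_pos_of_pos_left _ (by omega)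
      by_cases hgq : g' = q
      · exact hgq ▸ Nat.gcd_dvd_left _ _
      · exfalso
        have hg'lt : g' < q := lt_of_le_of_ne (Nat.le_of_dvd (by omega) hg'q) hgq
        have gg' : GPer f g' := by
          intro t
          obtain ⟨t', ht'1, ht'2, ht'3⟩ := exists_align q j t hq1
          have e1 : f t = f t' := gper_mod hq1 gq ht'3.symm
          have e2 : f (t + g') = f (t' + g') :=
            gper_mod hq1 gq (Nat.ModEq.add_right g' ht'3.symm)
          have e3 : f t' = f (t' + g') := hfw t' (by omega) (by omega)
          rw [e2, ← e3, e1]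
        have hmem2 : Nat.gcd g' n ∈ D :=
          ⟨Nat.gcd_pos_of_pos_left _ hg'1, Nat.gcd_dvd_right _ _,
            gper_gcd hg'1 hn1 gg' gpn⟩
        have h1 : q ≤ Nat.gcd g' n := Nat.sInf_le hmem2
        have h2 : Nat.gcd g' n ≤ g' := Nat.le_of_dvd (by omega) (Nat.gcd_dvd_left _ _)
        omega
    have hlong : Sl.ncard ≤ q * (n / (2 * q)) := by
      -- injection via the minimal occurrence position
      have hex : ∀ s ∈ Sl, ∃ j, s = win f j s.length := by
        intro s hs
        obtain ⟨ℓ, j, hℓ1, hsl, hln, hsw⟩ := hmem s hs.1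
        exact ⟨j, by rw [hsl]; exact hsw⟩
      set pos : List α → ℕ := fun s =>
        if h : ∃ j, s = win f j s.length then Nat.find h else 0 with hpos
      set Ψ : List α → ℕ × ℕ := fun s => (pos s, s.length) with hΨ
      set Tl : Finset (ℕ × ℕ) :=
        (Finset.range q) ×ˢ ((Finset.Icc 2 (n / (2 * q))).image (fun k => 2 * (k * q)))
        with hTl
      have hinj : Set.InjOn Ψ Sl := by
        intro s hs s' hs' heq
        have h1 : pos s = pos s' := congrArg Prod.fst heq
        have h2 : s.length = s'.length := congrArg Prod.snd heq
        have he := hex s hs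
        have he' := hex s' hs'
        have e1 : s = win f (pos s) s.length := by
          rw [hpos]
          simp only [dif_pos he]
          exact Nat.find_spec he
        have e2 : s' = win f (pos s') s'.length := by
          rw [hpos]
          simp only [dif_pos he']
          exact Nat.find_spec he'
        rw [e1, e2, h1, h2]
      have hmaps : Ψ '' Sl ⊆ ↑Tl := by
        rintro _ ⟨s, hs, rfl⟩
        obtain ⟨ℓ, j, hℓ1, hsl, hln, hsw⟩ := hmem s hs.1
        have hdvd := hqdvd s hs ℓ j hsl hsw
        obtain ⟨k, hk⟩ := hdvd
        have hℓq : q < ℓ := by have h2 := hs.2; omega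
        have hk2 : 2 ≤ k := by
          rcases Nat.lt_or_ge k 2 with h | h
          · interval_cases k <;> omega
          · exact h
        have hkn : k ≤ n / (2 * q) := by
          have hcomm : k * (2 * q) = 2 * (q * k) := by ring
          have : k * (2 * q) ≤ n := by omega
          exact Nat.le_div_iff_mul_le (by omega) |>.2 this
        have he := hex s hs
        have hposle : pos s < q := by
          have hwit : s = win f (j % q) s.length := by
            rw [hsl, hsw]
            exact gper_win hq1 gq (by rw [Nat.mod_mod_of_dvd _ (dvd_refl q)]) _
          have hfind : pos s ≤ j % q := by
            rw [hpos]
            simp only [dif_pos he]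
            exact Nat.find_min' he hwit
          have := Nat.mod_lt j (show 0 < q by omega)
          omega
        simp only [hTl, Finset.coe_sdiff, Finset.mem_coe, Finset.mem_product,
          Finset.mem_range, Finset.mem_image, Finset.mem_Icc]
        refine ⟨hposle, ⟨k, ⟨hk2, hkn⟩, ?_⟩⟩
        show 2 * (k * q) = s.length
        have hcomm : k * q = q * k := Nat.mul_comm _ _
        omega
      calc Sl.ncard = (Ψ '' Sl).ncard :=
            (Set.ncard_image_of_injOn hinj).symm
        _ ≤ (↑Tl : Set (ℕ × ℕ)).ncard :=
            Set.ncard_le_ncard hmaps Tl.finite_toSet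
        _ = Tl.card := Set.ncard_coe_finset Tl
        _ ≤ q * (n / (2 * q)) := by
            rw [hTl, Finset.card_product, Finset.card_range]
            have h1 : ((Finset.Icc 2 (n / (2 * q))).image (fun k => 2 * (k * q))).card
                ≤ (Finset.Icc 2 (n / (2 * q))).card := Finset.card_image_le
            have h2' : ∀ K : ℕ, (Finset.Icc 2 K).card ≤ K := by
              intro K
              rw [Nat.card_Icc]
              omega
            have h2 : (Finset.Icc 2 (n / (2 * q))).card ≤ n / (2 * q) := h2' _
            exact Nat.mul_le_mul_left q (le_trans h1 h2)
    have hhalf : q * (n / (2 * q)) ≤ n / 2 := by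
      have h1 : n / (2 * q) = n / 2 / q := by
        rw [Nat.div_div_eq_div_mul]
      rw [h1]
      calc q * (n / 2 / q) = n / 2 / q * q := Nat.mul_comm _ _
        _ ≤ n / 2 := Nat.div_mul_le_self _ _
    have htot : S.ncard ≤ 2 * (3 * q - 1) + n / 2 := by
      rw [hsplit]
      calc (Ss ∪ Sl).ncard ≤ Ss.ncard + Sl.ncard :=
            Set.ncard_union_le _ _
        _ ≤ 2 * (3 * q - 1) + n / 2 := by
            have := le_trans hlong hhalf
            omega
    omega
  · -- CASE B : some window is aperiodic
    push_neg at CA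
    obtain ⟨jstar, hap⟩ := CA
    set i := jstar + n - L with hi
    set F' : ℕ → α := fun t => f (i + t) with hF'
    have hFn : ∀ t, F' (t + n) = F' t := by
      intro t
      show f (i + (t + n)) = f (i + t)
      rw [show i + (t + n) = (i + t) + n from by omega]
      exact gper_fcirc hw (i + t)
    have hcount := count_main F' (2 * n) L n S (by omega) (by omega)
      ?_ ?_ ?_ ?_
    · omega
    · intro s hs
      obtain ⟨ℓ, j, hℓ1, hsl, hln, hsw⟩ := hmem s hs
      exact ⟨ℓ, hℓ1, hsl, hln⟩
    · intro s hs
      obtain ⟨ℓ, j, hℓ1, hsl, hln, hsw⟩ := hmem s hs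
      obtain ⟨j', hj'1, hj'2, hj'3⟩ := exists_align n i j hn1
      refine ⟨j' - i, ⟨by omega, ?_⟩⟩
      rw [hsl]
      have e1 : win F' (j' - i) (2 * ℓ) = win f j' (2 * ℓ) := by
        rw [hF', win_shift, show i + (j' - i) = j' from by omega]
      rw [e1]
      rw [hsw]
      exact gper_win hn1 (gper_fcirc hw) hj'3.symm _
    · intro s hs j ℓ h1 h2
      exact hperS s hs F' j ℓ h1 (by rw [← h1]; exact h2.2)
    · -- one per position below L
      intro j hjL ℓ1 ℓ2 hℓ11 hℓ12 h2K o2 p1 p2 rmax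
      -- the square cannot reoccur n to the right
      have hlong : n < j + 2 * ℓ1 := by
        by_contra hcon
        push_neg at hcon
        have := rmax (j + n) (by omega) (fun t ht => by
          rw [show j + n + t = (j + t) + n from by omega]
          exact hFn (j + t))
        omega
      have hℓ2lt : ℓ2 < 2 * ℓ1 := by
        by_contra hcon
        push_neg at hcon
        have := rmax (j + ℓ2) (by omega) (fun t ht => by
          have h := p2 (j + t) (by omega) (by omega)
          rw [show j + ℓ2 + t = j + t + ℓ2 from by omega]
          exact h.symm)
        omega
      set p := ℓ2 - ℓ1 with hp
      have hp1 : 1 ≤ p := by omega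
      have hpair : Per F' j (j + ℓ1) p := by
        have h := pair hℓ12 (by omega) p1 p2
        rwa [← hp] at h
      have hpL : 2 * p + 2 ≤ L := by omega
      have hcont : 2 * L ≤ j + ℓ1 := by omega
      have hPerL : Per f jstar (jstar + L) p := by
        intro t ht htb
        have e1 : f t = F' (L + (t - jstar)) := by
          rw [hF']
          show f t = f (i + (L + (t - jstar)))
          rw [show i + (L + (t - jstar)) = t + n from by omega]
          exact (gper_fcirc hw t).symm
        have e2 : f (t + p) = F' (L + (t - jstar) + p) := by
          rw [hF']
          show f (t + p) = f (i + (L + (t - jstar) + p))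
          rw [show i + (L + (t - jstar) + p) = (t + p) + n from by omega]
          exact (gper_fcirc hw (t + p)).symm
        rw [e1, e2]
        exact hpair (L + (t - jstar)) (by omega) (by omega)
      exact hap p hp1 (by omega) hPerL
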